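/- (Claim 3.8.) Fix a realization (A, R_A) in the support of the process, an index i ∈ {1, …, m}, and an element β ∈ U_i \ {a_i}. Conditioned on (A, R_A) and on the event that i ∈ P_B and b_i = β, the expected number (over the remaining randomness of B and over R_B) of elements x ∈ U_i such that (x, r) ∈ P_i(F(A, R_A)) for some r and the first bit of Query(G(F(A, R_A), B, R_B), x) equals 1, is at most m + 1. -/

import Mathlib

noncomputable section

namespace Retrieval

/-! ### Entropy on a finite sample space with the uniform distribution -/

/-- The probability of an event `s` under the uniform distribution on a finite type `Ω`. -/
def unifPr (Ω : Type*) [Fintype Ω] (s : Set Ω) : ℝ :=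
  (Nat.card s : ℝ) / (Fintype.card Ω : ℝ)

/-- The Shannon entropy (in bits) of a random variable `X` defined on a finite sample
space `Ω` carrying the uniform distribution. -/
def entropy {Ω : Type*} {α : Type*} [Fintype Ω] (X : Ω → α) : ℝ :=
  (∑ ω : Ω, -Real.logb 2 (unifPr Ω {ω' | X ω' = X ω})) / (Fintype.card Ω : ℝ)

/-- The conditional Shannon entropy `H(X | Y) = H(X, Y) − H(Y)` (in bits). -/
def condEntropy {Ω : Type*} {α β : Type*} [Fintype Ω] (X : Ω → α) (Y : Ω → β) : ℝ :=
  entropy (fun ω => (X ω, Y ω)) - entropy Y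

/-- The first bit of a `v`-bit string. -/
def firstBit {v : ℕ} (r : Fin v → Bool) : Bool :=
  if h : 0 < v then r ⟨0, h⟩ else false

/-! ### The incremental random process

Parameters `n v u`.  The universe `[u]` is split into `m = n − n/v` consecutive parts,
each of size `u/m`.  An element of the `i`-th part is identified by its position
`a ∈ Fin (u/m)` inside the part; as a natural number it is the key `i·(u/m) + a`. -/

variable (n v u : ℕ)

/-- `m = n − n/v`, the number of parts of the universe. -/
def M : ℕ := n - n / v

/-- `u/m`, the size of each part of the universe. -/
def W : ℕ := u / M n v

/-- The key (element of `[u]`, 0-indexed) at position `a` of part `i`. -/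
def key (i : Fin (M n v)) (a : Fin (W n v u)) : ℕ := (i : ℕ) * W n v u + (a : ℕ)

/-- The model hypotheses on the parameters: `2 ≤ v ≤ log₂ n`, `v ∣ n`,
`m = n − n/v` divides `u`, and `u ≥ n³`. -/
def Hyp : Prop :=
  2 ≤ v ∧ (v : ℝ) ≤ Real.logb 2 n ∧ v ∣ n ∧ M n v ∣ u ∧ n ^ 3 ≤ u

/-- Raw data of a realization of the incremental random process:
`((A, R_A), (P_B, B, R_B))`.  `A i` is the (position of the) element of `A` in part `i`
and `R_A i` its `v`-bit value; `P_B` is the set of parts from which `B` samples, `B i` the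
element of `B` in part `i` (for `i ∈ P_B`; it is a canonical junk value `0` otherwise) and
`R_B i` its value (a canonical junk value otherwise). -/
abbrev IncData : Type :=
  ((Fin (M n v) → Fin (W n v u)) × (Fin (M n v) → Fin v → Bool)) ×
    (Finset (Fin (M n v)) × (Fin (M n v) → Fin (W n v u)) × (Fin (M n v) → Fin v → Bool))

/-- Validity of a realization of `(A, R_A)`: every value has first bit `0`
(the set `A` itself is unconstrained). -/
def ValidAR (_A : Fin (M n v) → Fin (W n v u)) (RA : Fin (M n v) → Fin v → Bool) : Prop :=
  ∀ j, firstBit (RA j) = false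

/-- Validity of a realization `(P_B, B)` given `A`: `|P_B| = n/v`, for `i ∈ P_B` the
element `B i` avoids `A i`, and outside `P_B` the function `B` takes a canonical junk
value (so that `(P_B, B)` carries exactly the information of the indexed family
`(b_i)_{i ∈ P_B}`). -/
def ValidB (A : Fin (M n v) → Fin (W n v u)) (P : Finset (Fin (M n v)))
    (B : Fin (M n v) → Fin (W n v u)) : Prop :=
  P.card = n / v ∧ (∀ j ∈ P, B j ≠ A j) ∧ ∀ j ∉ P, (B j : ℕ) = 0

/-- Validity of a realization of `R_B` given `P_B`: for `i ∈ P_B` the value has first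
bit `1`; outside `P_B` it is a canonical junk value. -/
def ValidRB (P : Finset (Fin (M n v))) (RB : Fin (M n v) → Fin v → Bool) : Prop :=
  (∀ j ∈ P, firstBit (RB j) = true) ∧ ∀ j ∉ P, RB j = fun _ => false

/-- Validity of a full realization of the incremental process. -/
def IncValid (d : IncData n v u) : Prop :=
  ValidAR n v u d.1.1 d.1.2 ∧ ValidB n v u d.1.1 d.2.1 d.2.2.1 ∧ ValidRB n v d.2.1 d.2.2.2

/-- The sample space of the incremental random process: since every random choice in the
process is uniform (subject to the stated constraints, whose number of options does not
depend on the previous choices), the joint distribution of `(A, R_A, P_B, B, R_B)` is the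
uniform distribution on the set of valid realizations. -/
abbrev IncOmega : Type := {d : IncData n v u // IncValid n v u d}

noncomputable instance : Fintype (IncOmega n v u) := Fintype.ofFinite _

/-- The type of the (deterministic) map `F`, building a bit string from a realization of
`(A, R_A)`. -/
abbrev FBuilder : Type :=
  (Fin (M n v) → Fin (W n v u)) → (Fin (M n v) → Fin v → Bool) → List Bool

/-- The type of the (deterministic) map `G`, building a bit string from a bit string
together with a realization of `(B, R_B)` (given as `(P_B, B, R_B)`). -/
abbrev GBuilder : Type :=
  List Bool → Finset (Fin (M n v)) → (Fin (M n v) → Fin (W n v u)) →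
    (Fin (M n v) → Fin v → Bool) → List Bool

/-- The type of the (deterministic) query map: a bit string and a key give a `v`-bit
value. -/
abbrev QueryFn (v : ℕ) : Type := List Bool → ℕ → Fin v → Bool

/-- The random bit string `F = F(A, R_A)`. -/
def Frv (F : FBuilder n v u) (ω : IncOmega n v u) : List Bool := F ω.1.1.1 ω.1.1.2

/-- The random bit string `G = G(F(A, R_A), B, R_B)`. -/
def Grv (F : FBuilder n v u) (G : GBuilder n v u) (ω : IncOmega n v u) : List Bool :=
  G (Frv n v u F ω) ω.1.2.1 ω.1.2.2.1 ω.1.2.2.2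

/-- The random variable `B` (together with the set of parts `P_B` it samples from). -/
def Brv (ω : IncOmega n v u) : Finset (Fin (M n v)) × (Fin (M n v) → Fin (W n v u)) :=
  (ω.1.2.1, ω.1.2.2.1)

/-- The random variable `(B, R_B)`. -/
def BRrv (ω : IncOmega n v u) :
    Finset (Fin (M n v)) × (Fin (M n v) → Fin (W n v u)) × (Fin (M n v) → Fin v → Bool) :=
  ω.1.2

/-- Correctness of an incremental retrieval scheme `(F, G, Query)`: on every realization
in the support of the process, querying `F(A,R_A)` with a key of `A` returns its value,
and querying `G(F(A,R_A),B,R_B)` with a key of `A` or of `B` returns its value. -/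
def Correct (F : FBuilder n v u) (G : GBuilder n v u) (Q : QueryFn v) : Prop :=
  ∀ ω : IncOmega n v u,
    (∀ i, Q (Frv n v u F ω) (key n v u i (ω.1.1.1 i)) = ω.1.1.2 i) ∧
    (∀ i, Q (Grv n v u F G ω) (key n v u i (ω.1.1.1 i)) = ω.1.1.2 i) ∧
    (∀ i ∈ ω.1.2.1, Q (Grv n v u F G ω) (key n v u i (ω.1.2.2.1 i)) = ω.1.2.2.2 i)

/-- The plausible set `P_i(f)`: all pairs `(x, r)` of an element `x` of part `i` and a
`v`-bit value `r` with first bit `0` such that some realization `(A', R'_{A'})` in the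
support of `(A, R_A)` has `F(A', R'_{A'}) = f`, `x` the element of `A'` in part `i`, and
`r` its value. -/
def Plausible (F : FBuilder n v u) (f : List Bool) (i : Fin (M n v)) :
    Set (Fin (W n v u) × (Fin v → Bool)) :=
  {p | ∃ A' RA', ValidAR n v u A' RA' ∧ F A' RA' = f ∧ A' i = p.1 ∧ RA' i = p.2}

/-- A pair `(x, r) ∈ P_i(f)` *remains feasible after `B`* (given as `(P_B, B)`) if the
witness `(A', R'_{A'})` can additionally be chosen with `A' ∩ B = ∅`. -/
def Feasible (F : FBuilder n v u) (f : List Bool) (i : Fin (M n v))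
    (P : Finset (Fin (M n v))) (B : Fin (M n v) → Fin (W n v u))
    (p : Fin (W n v u) × (Fin v → Bool)) : Prop :=
  ∃ A' RA', ValidAR n v u A' RA' ∧ F A' RA' = f ∧ A' i = p.1 ∧ RA' i = p.2 ∧
    ∀ j ∈ P, B j ≠ A' j

end Retrieval

namespace Retrieval

set_option maxHeartbeats 2000000

/-- **Claim 3.8.** Fix a realization `(A, R_A)` in the support of the process, an index
`i ∈ {1, …, m}`, and an element `β ∈ U_i \ {a_i}`.  Conditioned on `(A, R_A)` and on the
event that `i ∈ P_B` and `b_i = β`, the expected number (over the remaining randomness of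
`B` and over `R_B`) of elements `x ∈ U_i` such that `(x, r) ∈ P_i(F(A, R_A))` for some
`r` and the first bit of `Query(G(F(A, R_A), B, R_B), x)` equals `1`, is at most `m + 1`.

(Conditioned on `(A, R_A)`, the triple `(P_B, B, R_B)` is uniform over its valid
realizations, so the conditional expectation is the corresponding average of counts over
valid realizations with `i ∈ P_B` and `b_i = β`.) -/
theorem expected_B_answers :
    ∀ n v u : ℕ, Hyp n v u →
    ∀ (F : FBuilder n v u) (G : GBuilder n v u) (Q : QueryFn v),
      Correct n v u F G Q →
    ∀ (A : Fin (M n v) → Fin (W n v u)) (RA : Fin (M n v) → Fin v → Bool),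
      ValidAR n v u A RA →
    ∀ (i : Fin (M n v)) (β : Fin (W n v u)), β ≠ A i →
      (∑ q : Finset (Fin (M n v)) × (Fin (M n v) → Fin (W n v u)) ×
          (Fin (M n v) → Fin v → Bool),
          Set.indicator {q | ValidB n v u A q.1 q.2.1 ∧ ValidRB n v q.1 q.2.2 ∧
              i ∈ q.1 ∧ q.2.1 i = β}
            (fun q => (Nat.card {x : Fin (W n v u) |
                (∃ r, (x, r) ∈ Plausible n v u F (F A RA) i) ∧
                  firstBit (Q (G (F A RA) q.1 q.2.1 q.2.2) (key n v u i x)) = true} : ℝ))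
            q) /
        (Nat.card {q : Finset (Fin (M n v)) × (Fin (M n v) → Fin (W n v u)) ×
            (Fin (M n v) → Fin v → Bool) //
          ValidB n v u A q.1 q.2.1 ∧ ValidRB n v q.1 q.2.2 ∧
            i ∈ q.1 ∧ q.2.1 i = β} : ℝ) ≤ (M n v : ℝ) + 1 := by
  intro n v u hyp F G Q hcor A RA hAR i β hβ
  classical
  obtain ⟨hv2, hvlog, hvn, hMu, hu3⟩ := hyp
  -- ## Numeric facts
  have hn1 : 1 ≤ n := by
    rcases Nat.eq_zero_or_pos n with h0 | h
    · subst h0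
      simp only [Nat.cast_zero, Real.logb_zero] at hvlog
      have h2 : (2 : ℝ) ≤ (v : ℝ) := by exact_mod_cast hv2
      linarith
    · exact h
  have hn4 : 4 ≤ n := by
    have h2 : (2 : ℝ) ≤ Real.logb 2 n := le_trans (by exact_mod_cast hv2) hvlog
    have hn0 : (0 : ℝ) < n := by exact_mod_cast hn1
    have h4 : (2 : ℝ) ^ (2 : ℝ) ≤ (2 : ℝ) ^ (Real.logb 2 n) :=
      (Real.rpow_le_rpow_left_iff (by norm_num)).mpr h2
    rw [Real.rpow_logb (by norm_num) (by norm_num) hn0] at h4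
    have e : (2 : ℝ) ^ (2 : ℝ) = 4 := by
      rw [show (2 : ℝ) = ((2 : ℕ) : ℝ) by norm_num, Real.rpow_natCast]
      norm_num
    rw [e] at h4
    exact_mod_cast h4
  have hv0 : 0 < v := by omega
  have hvlen : v ≤ n := Nat.le_of_dvd (by omega) hvn
  have hkv : (n / v) * v = n := Nat.div_mul_cancel hvn
  have hk1 : 1 ≤ n / v := by
    rcases Nat.eq_zero_or_pos (n / v) with h0 | h
    · rw [h0] at hkv; omega
    · exact h
  have h2k : 2 * (n / v) ≤ n := by
    calc 2 * (n / v) ≤ v * (n / v) := Nat.mul_le_mul_right _ hv2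
      _ = n := by rw [Nat.mul_comm]; exact hkv
  have hMdef : M n v = n - n / v := rfl
  have hkM : n / v ≤ M n v := by omega
  have hM1 : 1 ≤ M n v := le_trans hk1 hkM
  have hMn : M n v ≤ n := by omega
  have hMW : M n v * W n v u = u := Nat.mul_div_cancel' hMu
  have hWn2 : n ^ 2 ≤ W n v u := by
    have h1 : n * n ^ 2 ≤ n * W n v u := by
      calc n * n ^ 2 = n ^ 3 := by ring
        _ ≤ u := hu3
        _ = M n v * W n v u := hMW.symm
        _ ≤ n * W n v u := Nat.mul_le_mul_right _ hMn
    exact Nat.le_of_mul_le_mul_left h1 (by omega)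
  have hnn2 : n ≤ n ^ 2 := by nlinarith
  have hkW : n / v ≤ W n v u := le_trans (Nat.div_le_self n v) (le_trans hnn2 hWn2)
  have hW2 : 2 ≤ W n v u := by nlinarith
  -- ## The witness functions
  have hwit : ∀ x : Fin (W n v u), (∃ r, (x, r) ∈ Plausible n v u F (F A RA) i) →
      ∃ A' RA', ValidAR n v u A' RA' ∧ F A' RA' = F A RA ∧ A' i = x := by
    rintro x ⟨r, hr⟩
    obtain ⟨A', RA', h1, h2, h3, -⟩ := hr
    exact ⟨A', RA', h1, h2, h3⟩
  choose! Aw RAw hA1 hA2 hA3 using hwit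
  -- ## The conditioned sample space
  set SF : Finset (Finset (Fin (M n v)) × (Fin (M n v) → Fin (W n v u)) ×
      (Fin (M n v) → Fin v → Bool)) :=
    Finset.univ.filter (fun q => ValidB n v u A q.1 q.2.1 ∧ ValidRB n v q.1 q.2.2 ∧
      i ∈ q.1 ∧ q.2.1 i = β) with hSF
  have hmemSF : ∀ q, q ∈ SF ↔ (ValidB n v u A q.1 q.2.1 ∧ ValidRB n v q.1 q.2.2 ∧
      i ∈ q.1 ∧ q.2.1 i = β) := by
    intro q
    rw [hSF, Finset.mem_filter]
    simp
  -- ## Key structural lemma (from correctness)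
  have L1 : ∀ q, q ∈ SF → ∀ x : Fin (W n v u),
      (∃ r, (x, r) ∈ Plausible n v u F (F A RA) i) →
      firstBit (Q (G (F A RA) q.1 q.2.1 q.2.2) (key n v u i x)) = true →
      x = β ∨ ∃ j, j ≠ i ∧ j ∈ q.1 ∧ q.2.1 j = Aw x j := by
    intro q hq x hx hbit
    obtain ⟨hB, hRB, hiP, hiβ⟩ := (hmemSF q).mp hq
    by_cases hcol : ∃ j ∈ q.1, q.2.1 j = Aw x j
    · obtain ⟨j, hj, hje⟩ := hcol
      by_cases hji : j = i
      · left
        subst hji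
        rw [hiβ, hA3 x hx] at hje
        exact hje.symm
      · right; exact ⟨j, hji, hj, hje⟩
    · exfalso
      push_neg at hcol
      have hvalid : IncValid n v u ((Aw x, RAw x), q) :=
        ⟨hA1 x hx, ⟨hB.1, fun j hj => hcol j hj, hB.2.2⟩, hRB⟩
      have h2 : Q (G (F (Aw x) (RAw x)) q.1 q.2.1 q.2.2) (key n v u i (Aw x i)) = RAw x i :=
        (hcor ⟨((Aw x, RAw x), q), hvalid⟩).2.1 i
      rw [hA2 x hx, hA3 x hx] at h2
      rw [h2, hA1 x hx i] at hbit
      exact Bool.false_ne_true hbit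
  -- ## Per-realization union bound
  have L2 : ∀ q ∈ SF,
      (Finset.univ.filter (fun x : Fin (W n v u) =>
        (∃ r, (x, r) ∈ Plausible n v u F (F A RA) i) ∧
          firstBit (Q (G (F A RA) q.1 q.2.1 q.2.2) (key n v u i x)) = true)).card ≤
      (∑ j ∈ Finset.univ.erase i,
        (Finset.univ.filter (fun x : Fin (W n v u) =>
          j ∈ q.1 ∧ q.2.1 j = Aw x j)).card) + 1 := by
    intro q hq
    have hsub : Finset.univ.filter (fun x : Fin (W n v u) =>
        (∃ r, (x, r) ∈ Plausible n v u F (F A RA) i) ∧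
          firstBit (Q (G (F A RA) q.1 q.2.1 q.2.2) (key n v u i x)) = true) ⊆
        insert β ((Finset.univ.erase i).biUnion fun j =>
          Finset.univ.filter (fun x : Fin (W n v u) => j ∈ q.1 ∧ q.2.1 j = Aw x j)) := by
      intro x hx
      rw [Finset.mem_filter] at hx
      rcases L1 q hq x hx.2.1 hx.2.2 with h | ⟨j, hji, hj1, hj2⟩
      · rw [h]; exact Finset.mem_insert_self _ _
      · refine Finset.mem_insert_of_mem (Finset.mem_biUnion.mpr
          ⟨j, Finset.mem_erase.mpr ⟨hji, Finset.mem_univ j⟩, ?_⟩)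
        simp [hj1, hj2]
    calc (Finset.univ.filter _).card
        ≤ (insert β ((Finset.univ.erase i).biUnion fun j =>
            Finset.univ.filter (fun x : Fin (W n v u) =>
              j ∈ q.1 ∧ q.2.1 j = Aw x j))).card := Finset.card_le_card hsub
      _ ≤ ((Finset.univ.erase i).biUnion fun j =>
            Finset.univ.filter (fun x : Fin (W n v u) =>
              j ∈ q.1 ∧ q.2.1 j = Aw x j)).card + 1 := Finset.card_insert_le _ _
      _ ≤ (∑ j ∈ Finset.univ.erase i,
            (Finset.univ.filter (fun x : Fin (W n v u) =>
              j ∈ q.1 ∧ q.2.1 j = Aw x j)).card) + 1 :=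
          Nat.add_le_add_right (Finset.card_biUnion_le) 1
  -- ## Swap of summation per j
  have hswap : ∀ j : Fin (M n v),
      ∑ q ∈ SF, (Finset.univ.filter (fun x : Fin (W n v u) =>
        j ∈ q.1 ∧ q.2.1 j = Aw x j)).card =
      ∑ x : Fin (W n v u),
        (SF.filter (fun q => j ∈ q.1 ∧ q.2.1 j = Aw x j)).card := by
    intro j
    simp only [Finset.card_filter]
    exact Finset.sum_comm
  -- ## Frequency bound: each value of B j occurs at most |{q ∈ SF : j ∈ P}|/(W-1) times
  have L5 : ∀ j : Fin (M n v), j ≠ i → ∀ c : Fin (W n v u),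
      (W n v u - 1) * (SF.filter (fun q => j ∈ q.1 ∧ q.2.1 j = c)).card ≤
      (SF.filter (fun q => j ∈ q.1)).card := by
    intro j hji c
    by_cases hc : c = A j
    · have h0 : (SF.filter (fun q => j ∈ q.1 ∧ q.2.1 j = c)).card = 0 := by
        rw [Finset.card_eq_zero, Finset.filter_eq_empty_iff]
        intro q hq
        obtain ⟨hB, -, -, -⟩ := (hmemSF q).mp hq
        rintro ⟨hj1, hj2⟩
        exact hB.2.1 j hj1 (hj2.trans hc)
      rw [h0]; simp
    · have hmono : ∀ c' : Fin (W n v u), c' ≠ A j →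
          (SF.filter (fun q => j ∈ q.1 ∧ q.2.1 j = c)).card ≤
          (SF.filter (fun q => j ∈ q.1 ∧ q.2.1 j = c')).card := by
        intro c' hc'
        apply Finset.card_le_card_of_injOn
          (fun q => (q.1, Function.update q.2.1 j c', q.2.2))
        · intro q hq
          rw [Finset.mem_coe, Finset.mem_filter] at hq
          obtain ⟨hqSF, hj1, hj2⟩ := hq
          obtain ⟨hB, hRB, hiP, hiβ⟩ := (hmemSF q).mp hqSF
          rw [Finset.mem_coe, Finset.mem_filter]
          refine ⟨(hmemSF _).mpr ⟨⟨hB.1, ?_, ?_⟩, hRB, hiP, ?_⟩, hj1, ?_⟩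
          · intro l hl
            show Function.update q.2.1 j c' l ≠ A l
            by_cases hlj : l = j
            · subst hlj; rw [Function.update_self]; exact hc'
            · rw [Function.update_of_ne hlj]; exact hB.2.1 l hl
          · intro l hl
            show ((Function.update q.2.1 j c' l : Fin (W n v u)) : ℕ) = 0
            have hlj : l ≠ j := fun h => hl (h ▸ hj1)
            rw [Function.update_of_ne hlj]; exact hB.2.2 l hl
          · show Function.update q.2.1 j c' i = β
            have hij : i ≠ j := fun h => hji h.symm
            rw [Function.update_of_ne hij]; exact hiβ
          · show Function.update q.2.1 j c' j = c'
            exact Function.update_self j c' q.2.1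
        · intro q hq q' hq' he
          simp only [Finset.coe_filter, Set.mem_setOf_eq] at hq hq'
          have he' : (q.1, Function.update q.2.1 j c', q.2.2) =
              (q'.1, Function.update q'.2.1 j c', q'.2.2) := he
          simp only [Prod.mk.injEq] at he'
          obtain ⟨h1, hupd, h3⟩ := he' 
          have h2 : q.2.1 = q'.2.1 := by
            funext l
            by_cases hl : l = j
            · subst hl; rw [hq.2.2, hq'.2.2]
            · have := congrFun hupd l
              simpa [Function.update_of_ne hl] using this
          exact Prod.ext h1 (Prod.ext h2 h3)
      have hsum : ∑ c' : Fin (W n v u),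
          (SF.filter (fun q => j ∈ q.1 ∧ q.2.1 j = c')).card =
          (SF.filter (fun q => j ∈ q.1)).card := by
        simp only [Finset.card_filter]
        rw [Finset.sum_comm]
        refine Finset.sum_congr rfl fun q _ => ?_
        by_cases hj : j ∈ q.1
        · simp [hj]
        · simp [hj]
      calc (W n v u - 1) * (SF.filter (fun q => j ∈ q.1 ∧ q.2.1 j = c)).card
          = ∑ _c' ∈ Finset.univ.erase (A j),
              (SF.filter (fun q => j ∈ q.1 ∧ q.2.1 j = c)).card := by
            rw [Finset.sum_const, Finset.card_erase_of_mem (Finset.mem_univ _),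
              Finset.card_univ, Fintype.card_fin, smul_eq_mul]
        _ ≤ ∑ c' ∈ Finset.univ.erase (A j),
              (SF.filter (fun q => j ∈ q.1 ∧ q.2.1 j = c')).card :=
            Finset.sum_le_sum fun c' hc' => hmono c' (Finset.mem_erase.mp hc').1
        _ ≤ ∑ c' : Fin (W n v u),
              (SF.filter (fun q => j ∈ q.1 ∧ q.2.1 j = c')).card :=
            Finset.sum_le_sum_of_subset (Finset.erase_subset _ _)
        _ = (SF.filter (fun q => j ∈ q.1)).card := hsum
  -- ## Total mass of the fibers
  have L6 : ∑ j ∈ Finset.univ.erase i, (SF.filter (fun q => j ∈ q.1)).card =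
      SF.card * (n / v - 1) := by
    have hpt : ∀ q ∈ SF,
        (∑ j ∈ Finset.univ.erase i, if j ∈ q.1 then 1 else 0) = n / v - 1 := by
      intro q hq
      obtain ⟨hB, -, hiP, -⟩ := (hmemSF q).mp hq
      rw [← Finset.card_filter]
      have he : (Finset.univ.erase i).filter (fun j => j ∈ q.1) = q.1.erase i := by
        ext l
        simp only [Finset.mem_filter, Finset.mem_erase, Finset.mem_univ, and_true,
          true_and]
      rw [he, Finset.card_erase_of_mem hiP, hB.1]
    simp only [Finset.card_filter]
    rw [Finset.sum_comm, Finset.sum_congr rfl hpt, Finset.sum_const, smul_eq_mul]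
  -- ## Putting the double count together
  have hT : (W n v u - 1) * (∑ j ∈ Finset.univ.erase i, ∑ x : Fin (W n v u),
      (SF.filter (fun q => j ∈ q.1 ∧ q.2.1 j = Aw x j)).card) ≤
      W n v u * (SF.card * (n / v - 1)) := by
    rw [Finset.mul_sum]
    calc ∑ j ∈ Finset.univ.erase i, (W n v u - 1) * ∑ x : Fin (W n v u),
          (SF.filter (fun q => j ∈ q.1 ∧ q.2.1 j = Aw x j)).card
        = ∑ j ∈ Finset.univ.erase i, ∑ x : Fin (W n v u), (W n v u - 1) *
            (SF.filter (fun q => j ∈ q.1 ∧ q.2.1 j = Aw x j)).card := by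
          refine Finset.sum_congr rfl fun j _ => ?_
          rw [Finset.mul_sum]
      _ ≤ ∑ j ∈ Finset.univ.erase i, ∑ _x : Fin (W n v u),
            (SF.filter (fun q => j ∈ q.1)).card := by
          refine Finset.sum_le_sum fun j hj => Finset.sum_le_sum fun x _ => ?_
          exact L5 j (Finset.mem_erase.mp hj).1 (Aw x j)
      _ = ∑ j ∈ Finset.univ.erase i, W n v u * (SF.filter (fun q => j ∈ q.1)).card := by
          refine Finset.sum_congr rfl fun j _ => ?_
          rw [Finset.sum_const, Finset.card_univ, Fintype.card_fin, smul_eq_mul]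
      _ = W n v u * ∑ j ∈ Finset.univ.erase i, (SF.filter (fun q => j ∈ q.1)).card := by
          rw [Finset.mul_sum]
      _ = W n v u * (SF.card * (n / v - 1)) := by rw [L6]
  have hTk : (∑ j ∈ Finset.univ.erase i, ∑ x : Fin (W n v u),
      (SF.filter (fun q => j ∈ q.1 ∧ q.2.1 j = Aw x j)).card) ≤ (n / v) * SF.card := by
    refine Nat.le_of_mul_le_mul_left ?_ (show 0 < W n v u - 1 by omega)
    calc (W n v u - 1) * (∑ j ∈ Finset.univ.erase i, ∑ x : Fin (W n v u),
          (SF.filter (fun q => j ∈ q.1 ∧ q.2.1 j = Aw x j)).card)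
        ≤ W n v u * (SF.card * (n / v - 1)) := hT
      _ ≤ (W n v u - 1) * ((n / v) * SF.card) := by
          have arith : ∀ w k : ℕ, 1 ≤ k → k ≤ w → w * (k - 1) ≤ (w - 1) * k := by
            intro w k h1 h2
            obtain ⟨a, rfl⟩ : ∃ a, k = a + 1 := ⟨k - 1, by omega⟩
            obtain ⟨b, rfl⟩ : ∃ b, w = b + 1 := ⟨w - 1, by omega⟩
            simp only [Nat.add_sub_cancel]
            nlinarith
          calc W n v u * (SF.card * (n / v - 1))
              = (W n v u * (n / v - 1)) * SF.card := by ring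
            _ ≤ ((W n v u - 1) * (n / v)) * SF.card :=
                Nat.mul_le_mul_right _ (arith _ _ hk1 hkW)
            _ = (W n v u - 1) * ((n / v) * SF.card) := by ring
  -- ## The main counting inequality
  have hmain : (∑ q ∈ SF, (Finset.univ.filter (fun x : Fin (W n v u) =>
      (∃ r, (x, r) ∈ Plausible n v u F (F A RA) i) ∧
        firstBit (Q (G (F A RA) q.1 q.2.1 q.2.2) (key n v u i x)) = true)).card) ≤
      SF.card * (M n v + 1) := by
    calc ∑ q ∈ SF, (Finset.univ.filter (fun x : Fin (W n v u) =>
          (∃ r, (x, r) ∈ Plausible n v u F (F A RA) i) ∧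
            firstBit (Q (G (F A RA) q.1 q.2.1 q.2.2) (key n v u i x)) = true)).card
        ≤ ∑ q ∈ SF, ((∑ j ∈ Finset.univ.erase i,
            (Finset.univ.filter (fun x : Fin (W n v u) =>
              j ∈ q.1 ∧ q.2.1 j = Aw x j)).card) + 1) := Finset.sum_le_sum L2
      _ = (∑ q ∈ SF, ∑ j ∈ Finset.univ.erase i,
            (Finset.univ.filter (fun x : Fin (W n v u) =>
              j ∈ q.1 ∧ q.2.1 j = Aw x j)).card) + SF.card := by
          rw [Finset.sum_add_distrib, Finset.sum_const, smul_eq_mul, mul_one]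
      _ = (∑ j ∈ Finset.univ.erase i, ∑ q ∈ SF,
            (Finset.univ.filter (fun x : Fin (W n v u) =>
              j ∈ q.1 ∧ q.2.1 j = Aw x j)).card) + SF.card := by
          rw [Finset.sum_comm]
      _ = (∑ j ∈ Finset.univ.erase i, ∑ x : Fin (W n v u),
            (SF.filter (fun q => j ∈ q.1 ∧ q.2.1 j = Aw x j)).card) + SF.card := by
          rw [Finset.sum_congr rfl fun j _ => hswap j]
      _ ≤ (n / v) * SF.card + SF.card := Nat.add_le_add_right hTk _
      _ ≤ M n v * SF.card + SF.card := Nat.add_le_add_right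
          (Nat.mul_le_mul_right _ hkM) _
      _ = SF.card * (M n v + 1) := by ring
  -- ## Rewriting the goal
  have hnum : (∑ q : Finset (Fin (M n v)) × (Fin (M n v) → Fin (W n v u)) ×
          (Fin (M n v) → Fin v → Bool),
          Set.indicator {q | ValidB n v u A q.1 q.2.1 ∧ ValidRB n v q.1 q.2.2 ∧
              i ∈ q.1 ∧ q.2.1 i = β}
            (fun q => (Nat.card {x : Fin (W n v u) |
                (∃ r, (x, r) ∈ Plausible n v u F (F A RA) i) ∧
                  firstBit (Q (G (F A RA) q.1 q.2.1 q.2.2) (key n v u i x)) = true} : ℝ))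
            q) =
      ((∑ q ∈ SF, (Finset.univ.filter (fun x : Fin (W n v u) =>
        (∃ r, (x, r) ∈ Plausible n v u F (F A RA) i) ∧
          firstBit (Q (G (F A RA) q.1 q.2.1 q.2.2) (key n v u i x)) = true)).card : ℕ) : ℝ) := by
    rw [hSF, Nat.cast_sum, Finset.sum_filter]
    refine Finset.sum_congr rfl fun q _ => ?_
    rw [Set.indicator_apply]
    simp only [Set.mem_setOf_eq, Nat.card_eq_fintype_card, Fintype.card_subtype]
  have hden : Nat.card {q : Finset (Fin (M n v)) × (Fin (M n v) → Fin (W n v u)) ×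
            (Fin (M n v) → Fin v → Bool) //
          ValidB n v u A q.1 q.2.1 ∧ ValidRB n v q.1 q.2.2 ∧
            i ∈ q.1 ∧ q.2.1 i = β} = SF.card := by
    rw [hSF, Nat.card_eq_fintype_card, Fintype.card_subtype]
  rw [hnum, hden]
  rcases Nat.eq_zero_or_pos SF.card with h0 | hpos
  · have hSFe : SF = ∅ := Finset.card_eq_zero.mp h0
    rw [hSFe]
    simp
    positivity
  · rw [div_le_iff₀ (by exact_mod_cast hpos)]
    calc ((∑ q ∈ SF, (Finset.univ.filter (fun x : Fin (W n v u) =>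
          (∃ r, (x, r) ∈ Plausible n v u F (F A RA) i) ∧
            firstBit (Q (G (F A RA) q.1 q.2.1 q.2.2) (key n v u i x)) = true)).card : ℕ) : ℝ)
        ≤ ((SF.card * (M n v + 1) : ℕ) : ℝ) := Nat.cast_le.mpr hmain
      _ = ((M n v : ℝ) + 1) * (SF.card : ℝ) := by push_cast; ring


end Retrieval
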